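/- For any real constants a₁, a₂, the function h : (0, π) → ℝ defined by h(r) = (1/sin³r)( a₁ cos r + a₂ (4 sin²r + sin⁴r − 8) ) satisfies the ODE h''(r) + h'(r) cot r + (2 − 9/sin²r) h(r) = 0 for all r ∈ (0, π). -/

import Mathlib

open Real Set

private lemma hderiv1 (a1 a2 : ℝ) {r : ℝ} (hs : Real.sin r ≠ 0) :
    HasDerivAt (fun s : ℝ =>
        (a1 * Real.cos s + a2 * (4 * Real.sin s ^ 2 + Real.sin s ^ 4 - 8))
          / Real.sin s ^ 3)
      ((-a1 * (1 + 2 * Real.cos r ^ 2)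
          + a2 * Real.cos r * (Real.sin r ^ 4 - 4 * Real.sin r ^ 2 + 24))
        / Real.sin r ^ 4) r := by
  have hN : HasDerivAt (fun s : ℝ =>
      a1 * Real.cos s + a2 * (4 * Real.sin s ^ 2 + Real.sin s ^ 4 - 8))
      (a1 * (-Real.sin r) + a2 * (4 * (2 * Real.sin r ^ 1 * Real.cos r)
        + 4 * Real.sin r ^ 3 * Real.cos r - 0)) r := by
    exact ((Real.hasDerivAt_cos r).const_mul a1).add
      ((((((Real.hasDerivAt_sin r).pow 2).const_mul 4).add
        ((Real.hasDerivAt_sin r).pow 4)).sub (hasDerivAt_const r 8)).const_mul a2)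
  have hD : HasDerivAt (fun s : ℝ => Real.sin s ^ 3)
      (3 * Real.sin r ^ 2 * Real.cos r) r := by
    simpa using (Real.hasDerivAt_sin r).fun_pow 3
  have := hN.fun_div hD (pow_ne_zero 3 hs)
  refine this.congr_deriv (Eq.symm ?_)
  have hpy : Real.sin r ^ 2 + Real.cos r ^ 2 = 1 := Real.sin_sq_add_cos_sq r
  field_simp
  linear_combination a1 * hpy

private lemma hderiv2 (a1 a2 : ℝ) {r : ℝ} (hs : Real.sin r ≠ 0) :
    HasDerivAt (fun s : ℝ =>
        (-a1 * (1 + 2 * Real.cos s ^ 2)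
          + a2 * Real.cos s * (Real.sin s ^ 4 - 4 * Real.sin s ^ 2 + 24))
          / Real.sin s ^ 4)
      (((4 * a1 * Real.sin r * Real.cos r
          + a2 * (-Real.sin r * (Real.sin r ^ 4 - 4 * Real.sin r ^ 2 + 24)
            + Real.cos r * (4 * Real.sin r ^ 3 * Real.cos r - 8 * Real.sin r * Real.cos r)))
          * Real.sin r
        - 4 * Real.cos r * (-a1 * (1 + 2 * Real.cos r ^ 2)
          + a2 * Real.cos r * (Real.sin r ^ 4 - 4 * Real.sin r ^ 2 + 24)))
        / Real.sin r ^ 5) r := by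
  have hM : HasDerivAt (fun s : ℝ =>
      -a1 * (1 + 2 * Real.cos s ^ 2)
        + a2 * Real.cos s * (Real.sin s ^ 4 - 4 * Real.sin s ^ 2 + 24))
      (-a1 * (0 + 2 * (2 * Real.cos r ^ 1 * (-Real.sin r)))
        + (a2 * (-Real.sin r) * (Real.sin r ^ 4 - 4 * Real.sin r ^ 2 + 24)
          + a2 * Real.cos r * (4 * Real.sin r ^ 3 * Real.cos r
            - 4 * (2 * Real.sin r ^ 1 * Real.cos r) + 0))) r := by
    exact (((hasDerivAt_const r (1:ℝ)).add
        (((Real.hasDerivAt_cos r).pow 2).const_mul 2)).const_mul (-a1)).add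
      ((((Real.hasDerivAt_cos r).const_mul a2).mul
        ((((Real.hasDerivAt_sin r).pow 4).sub
          (((Real.hasDerivAt_sin r).pow 2).const_mul 4)).add (hasDerivAt_const r 24))))
  have hD : HasDerivAt (fun s : ℝ => Real.sin s ^ 4)
      (4 * Real.sin r ^ 3 * Real.cos r) r := by
    simpa using (Real.hasDerivAt_sin r).fun_pow 4
  have := hM.fun_div hD (pow_ne_zero 4 hs)
  refine this.congr_deriv (Eq.symm ?_)
  field_simp
  ring

/-- For any constants a₁, a₂, the function
h(r) = (a₁ cos r + a₂ (4 sin²r + sin⁴r − 8)) / sin³r satisfies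
h'' + h' cot r + (2 − 9/sin²r) h = 0 on (0, π). -/
theorem explicit_h_solves_ode (a1 a2 : ℝ) :
    ∀ r ∈ Ioo (0 : ℝ) π,
      deriv (deriv (fun s : ℝ =>
          (a1 * Real.cos s + a2 * (4 * Real.sin s ^ 2 + Real.sin s ^ 4 - 8))
            / Real.sin s ^ 3)) r
        + deriv (fun s : ℝ =>
            (a1 * Real.cos s + a2 * (4 * Real.sin s ^ 2 + Real.sin s ^ 4 - 8))
              / Real.sin s ^ 3) r * Real.cot r
        + (2 - 9 / Real.sin r ^ 2)
            * ((a1 * Real.cos r + a2 * (4 * Real.sin r ^ 2 + Real.sin r ^ 4 - 8))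
                / Real.sin r ^ 3) = 0 := by
  intro r hr
  have hs : Real.sin r ≠ 0 := ne_of_gt (Real.sin_pos_of_pos_of_lt_pi hr.1 hr.2)
  -- deriv h = h1 on a neighborhood
  have hnbhd : ∀ᶠ s in nhds r, Real.sin s ≠ 0 := by
    have : ∀ᶠ s in nhds r, s ∈ Ioo (0:ℝ) π := (isOpen_Ioo.eventually_mem hr)
    filter_upwards [this] with s hs'
    exact ne_of_gt (Real.sin_pos_of_pos_of_lt_pi hs'.1 hs'.2)
  have hderiv_eq : deriv (fun s : ℝ =>
      (a1 * Real.cos s + a2 * (4 * Real.sin s ^ 2 + Real.sin s ^ 4 - 8))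
        / Real.sin s ^ 3) =ᶠ[nhds r] (fun s =>
      (-a1 * (1 + 2 * Real.cos s ^ 2)
          + a2 * Real.cos s * (Real.sin s ^ 4 - 4 * Real.sin s ^ 2 + 24))
        / Real.sin s ^ 4) := by
    filter_upwards [hnbhd] with s hs'
    exact (hderiv1 a1 a2 hs').deriv
  have h1r := hderiv_eq.self_of_nhds
  have h2r : deriv (deriv (fun s : ℝ =>
      (a1 * Real.cos s + a2 * (4 * Real.sin s ^ 2 + Real.sin s ^ 4 - 8))
        / Real.sin s ^ 3)) r =
      ((4 * a1 * Real.sin r * Real.cos r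
          + a2 * (-Real.sin r * (Real.sin r ^ 4 - 4 * Real.sin r ^ 2 + 24)
            + Real.cos r * (4 * Real.sin r ^ 3 * Real.cos r - 8 * Real.sin r * Real.cos r)))
          * Real.sin r
        - 4 * Real.cos r * (-a1 * (1 + 2 * Real.cos r ^ 2)
          + a2 * Real.cos r * (Real.sin r ^ 4 - 4 * Real.sin r ^ 2 + 24)))
        / Real.sin r ^ 5 := by
    rw [hderiv_eq.deriv_eq]
    exact (hderiv2 a1 a2 hs).deriv
  rw [h2r, h1r, Real.cot_eq_cos_div_sin]
  have hpy : Real.sin r ^ 2 + Real.cos r ^ 2 = 1 := Real.sin_sq_add_cos_sq r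
  field_simp
  linear_combination (6 * a1 * Real.cos r
    + a2 * (4 * Real.sin r ^ 2 + Real.sin r ^ 4 - 72)) * hpy
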